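/- Let 0 < α₀ < π/2, α ∈ [−α₀, α₀] with cos(α) > 0, and t ∈ ℝ. Equality √(1 + cos²(α)·t²) = √(1 − cos²(α₀)/cos²(α)) + cos(α₀)·t holds if and only if √(1 − cos²(α₀)/cos²(α))·cos(α)·t = cos(α₀)/cos(α). -/

import Mathlib

open Real

theorem stmt7 (α₀ α t : ℝ) (h0 : 0 < α₀) (h1 : α₀ < π / 2)
    (hα : α ∈ Set.Icc (-α₀) α₀) (hc : 0 < Real.cos α) :
    Real.sqrt (1 + Real.cos α ^ 2 * t ^ 2) =
        Real.sqrt (1 - Real.cos α₀ ^ 2 / Real.cos α ^ 2) + Real.cos α₀ * t ↔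
      Real.sqrt (1 - Real.cos α₀ ^ 2 / Real.cos α ^ 2) * Real.cos α * t =
        Real.cos α₀ / Real.cos α := by
  obtain ⟨hl, hr⟩ := hα
  have hpi := Real.pi_pos
  have hc0 : 0 < Real.cos α₀ := Real.cos_pos_of_mem_Ioo ⟨by linarith, h1⟩
  have hle : Real.cos α₀ ≤ Real.cos α := by
    rw [← Real.cos_abs α]
    exact Real.cos_le_cos_of_nonneg_of_le_pi (abs_nonneg α) (by linarith)
      (abs_le.mpr ⟨hl, hr⟩)
  have hE : 0 ≤ 1 - Real.cos α₀ ^ 2 / Real.cos α ^ 2 := by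
    have h2 : Real.cos α₀ ^ 2 ≤ Real.cos α ^ 2 := by nlinarith
    have : Real.cos α₀ ^ 2 / Real.cos α ^ 2 ≤ 1 :=
      (div_le_one (by positivity)).mpr h2
    linarith
  set S := Real.sqrt (1 - Real.cos α₀ ^ 2 / Real.cos α ^ 2) with hSdef
  have hS : 0 ≤ S := Real.sqrt_nonneg _
  have hS2 : S ^ 2 = 1 - Real.cos α₀ ^ 2 / Real.cos α ^ 2 := Real.sq_sqrt hE
  have hS2c : S ^ 2 * Real.cos α ^ 2 = Real.cos α ^ 2 - Real.cos α₀ ^ 2 := by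
    rw [hS2, sub_mul, div_mul_cancel₀ _ (pow_ne_zero 2 hc.ne'), one_mul]
  constructor
  · intro h
    have hsq : 1 + Real.cos α ^ 2 * t ^ 2 = (S + Real.cos α₀ * t) ^ 2 := by
      rw [← h, Real.sq_sqrt (by positivity)]
    have key : (Real.cos α₀ - S * Real.cos α ^ 2 * t) ^ 2 = 0 := by
      linear_combination (Real.cos α ^ 2) * hsq +
        (1 + Real.cos α ^ 2 * t ^ 2) * hS2c
    have hz : Real.cos α₀ - S * Real.cos α ^ 2 * t = 0 :=
      pow_eq_zero_iff (n := 2) (by norm_num) |>.mp key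
    rw [eq_div_iff hc.ne']
    nlinarith [hz]
  · intro h
    have h' : S * Real.cos α ^ 2 * t = Real.cos α₀ := by
      rw [eq_div_iff hc.ne'] at h
      linear_combination h
    have hu : 0 < Real.cos α₀ / Real.cos α := div_pos hc0 hc
    have ht : 0 < t := by nlinarith [mul_nonneg hS (sq_nonneg (Real.cos α))]
    have hsqc : (S + Real.cos α₀ * t) ^ 2 * Real.cos α ^ 2 =
        (1 + Real.cos α ^ 2 * t ^ 2) * Real.cos α ^ 2 := by
      linear_combination (1 + Real.cos α ^ 2 * t ^ 2) * hS2c +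
        (Real.cos α₀ - S * Real.cos α ^ 2 * t) * h'
    have hsq : (S + Real.cos α₀ * t) ^ 2 = 1 + Real.cos α ^ 2 * t ^ 2 :=
      mul_right_cancel₀ (pow_ne_zero 2 hc.ne') hsqc
    rw [← hsq, Real.sqrt_sq (by positivity)]
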